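/- arXiv:math/0411249 — 2 statements merged into one kernel-verified Lean document; each statement's English description precedes it below -/
import Mathlib

section
/- (Proposition 5.2) Let 0 < q < 1 and 0 < a < q^{-2}. Then for all k, n ∈ ℕ the dual discrete q-ultraspherical polynomials satisfy: D_n^{(a)}(μ(2k;a)|q) = Σ_{j=0}^{n} [(q^{−2k};q²)_j (a q^{2k+1};q²)_j (q^{−2n};q²)_j] / [(a q²;q²)_j (q²;q²)_j] · (−1)^j q^{−j(j−1)} q^{(2n+1)j} and D_n^{(a)}(μ(2k+1;a)|q) = q^n · Σ_{j=0}^{n} [(q^{−2k};q²)_j (a q^{2k+3};q²)_j (q^{−2n};q²)_j] / [(a q²;q²)_j (q²;q²)_j] · (−1)^j q^{−j(j−1)} q^{(2n−1)j}. -/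
open scoped BigOperators

/-- The q-shifted factorial `(a;q)_k` (the first argument is the base). -/
noncomputable def qPoch (q a : ℝ) (k : ℕ) : ℝ :=
  ∏ j ∈ Finset.range k, (1 - a * q ^ j)

/-- The dual discrete q-ultraspherical polynomials `D_n^{(a)}(μ(x;a)|q)`,
`μ(x;a) = q^{-x} + a q^{x+1}`. -/
noncomputable def dualDiscreteQUltra (q a : ℝ) (n x : ℕ) : ℝ :=
  ∑ j ∈ Finset.range (n + 1),
    qPoch q (q ^ (-(x : ℤ))) j * qPoch q (a * q ^ (x + 1)) j *
        qPoch q (q ^ (-(n : ℤ))) j /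
      (qPoch (q ^ 2) (a * q ^ 2) j * qPoch q q j) * (-q ^ (n + 1)) ^ j

set_option linter.unusedSectionVars false

/-- g(n,j) = ∏_{i<j} (1 - b^{n-i}) with integer exponent. -/
noncomputable def gg (b : ℝ) (n : ℤ) (j : ℕ) : ℝ :=
  ∏ i ∈ Finset.range j, (1 - b ^ (n - (i : ℤ)))

noncomputable def eA (q : ℝ) (j : ℕ) : ℝ := ∏ i ∈ Finset.range j, q ^ (i + 1)

noncomputable def dA (q a : ℝ) (j : ℕ) : ℝ := qPoch (q ^ 2) (a * q ^ 2) j * qPoch q q j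
noncomputable def dB (q a : ℝ) (j : ℕ) : ℝ := qPoch (q ^ 2) (a * q ^ 2) j * qPoch (q ^ 2) (q ^ 2) j

noncomputable def PA (q a s : ℝ) (j : ℕ) : ℝ :=
  ∏ i ∈ Finset.range j, (1 - s * q ^ i + a * q ^ (2 * i + 1))
noncomputable def PB (q a s : ℝ) (j : ℕ) : ℝ :=
  ∏ i ∈ Finset.range j, (1 - s * q ^ (2 * i) + a * q ^ (4 * i + 1))
noncomputable def PC (q a s : ℝ) (j : ℕ) : ℝ :=
  ∏ i ∈ Finset.range j, (1 - s * q ^ (2 * i + 1) + a * q ^ (4 * i + 3))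

noncomputable def uA (q a : ℝ) (n j : ℕ) : ℝ := eA q j * gg q n j / dA q a j
noncomputable def uB (q a : ℝ) (n j : ℕ) : ℝ := q ^ j * gg (q ^ 2) n j / dB q a j
noncomputable def uC (q a : ℝ) (n j : ℕ) : ℝ := q ^ n * gg (q ^ 2) n j / (q ^ j * dB q a j)

noncomputable def SA (q a s : ℝ) (n N : ℕ) : ℝ := ∑ j ∈ Finset.range N, uA q a n j * PA q a s j
noncomputable def SB (q a s : ℝ) (n N : ℕ) : ℝ := ∑ j ∈ Finset.range N, uB q a n j * PB q a s j
noncomputable def SC (q a s : ℝ) (n N : ℕ) : ℝ := ∑ j ∈ Finset.range N, uC q a n j * PC q a s j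

-- basic product step lemmas
lemma qPoch_succ (q a : ℝ) (j : ℕ) : qPoch q a (j + 1) = qPoch q a j * (1 - a * q ^ j) :=
  Finset.prod_range_succ _ _

lemma eA_succ (q : ℝ) (j : ℕ) : eA q (j + 1) = eA q j * q ^ (j + 1) :=
  Finset.prod_range_succ _ _

lemma gg_succ_right (b : ℝ) (n : ℤ) (j : ℕ) :
    gg b n (j + 1) = gg b n j * (1 - b ^ (n - (j : ℤ))) :=
  Finset.prod_range_succ _ _

lemma gg_succ_left (b : ℝ) (n : ℤ) (j : ℕ) :
    gg b (n + 1) (j + 1) = (1 - b ^ (n + 1)) * gg b n j := by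
  rw [gg, Finset.prod_range_succ']
  simp only [Nat.cast_zero, sub_zero]
  rw [mul_comm]
  congr 1
  refine Finset.prod_congr rfl fun i _ => ?_
  congr 2
  push_cast
  ring

lemma gg_zero_of_lt (b : ℝ) (n j : ℕ) (h : n < j) : gg b (n : ℤ) j = 0 := by
  apply Finset.prod_eq_zero (Finset.mem_range.mpr h)
  simp

lemma dA_succ (q a : ℝ) (j : ℕ) :
    dA q a (j + 1) = dA q a j * ((1 - a * q ^ (2 * j + 2)) * (1 - q ^ (j + 1))) := by
  rw [dA, dA, qPoch_succ, qPoch_succ]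
  have h1 : a * q ^ 2 * (q ^ 2) ^ j = a * q ^ (2 * j + 2) := by rw [← pow_mul]; ring
  have h2 : q * q ^ j = q ^ (j + 1) := by ring
  rw [h1, h2]; ring

lemma dB_succ (q a : ℝ) (j : ℕ) :
    dB q a (j + 1) = dB q a j * ((1 - a * q ^ (2 * j + 2)) * (1 - q ^ (2 * j + 2))) := by
  rw [dB, dB, qPoch_succ, qPoch_succ]
  have h1 : a * q ^ 2 * (q ^ 2) ^ j = a * q ^ (2 * j + 2) := by rw [← pow_mul]; ring
  have h2 : (q ^ 2 : ℝ) * (q ^ 2) ^ j = q ^ (2 * j + 2) := by rw [← pow_mul]; ring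
  rw [h1, h2]; ring

lemma PA_succ (q a s : ℝ) (j : ℕ) :
    PA q a s (j + 1) = PA q a s j * (1 - s * q ^ j + a * q ^ (2 * j + 1)) :=
  Finset.prod_range_succ _ _

lemma PB_succ (q a s : ℝ) (j : ℕ) :
    PB q a s (j + 1) = PB q a s j * (1 - s * q ^ (2 * j) + a * q ^ (4 * j + 1)) :=
  Finset.prod_range_succ _ _

lemma PC_succ (q a s : ℝ) (j : ℕ) :
    PC q a s (j + 1) = PC q a s j * (1 - s * q ^ (2 * j + 1) + a * q ^ (4 * j + 3)) :=
  Finset.prod_range_succ _ _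


section
variable {q a : ℝ} (hq0 : 0 < q) (hq1 : q < 1) (ha0 : 0 < a) (ha1 : a < (q ^ 2)⁻¹)

include hq0 hq1 in
lemma one_sub_pow_pos (k : ℕ) : (0 : ℝ) < 1 - q ^ (k + 1) := by
  have : q ^ (k + 1) < 1 := pow_lt_one₀ hq0.le hq1 (Nat.succ_ne_zero k)
  linarith

include hq0 hq1 ha0 ha1 in
lemma one_sub_aq_pos (k : ℕ) : (0 : ℝ) < 1 - a * q ^ (k + 2) := by
  have hq2 : (0:ℝ) < q ^ 2 := by positivity
  have haq2 : a * q ^ 2 < 1 := by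
    rw [← lt_div_iff₀ hq2] at *
    simpa [div_eq_mul_inv, one_div] using ha1
  have hk : q ^ k ≤ 1 := pow_le_one₀ hq0.le hq1.le
  have : a * q ^ (k + 2) = (a * q ^ 2) * q ^ k := by ring
  rw [this]
  nlinarith [mul_pos ha0 hq2]

include hq0 hq1 ha0 ha1 in
lemma qPoch_aq_pos (j : ℕ) : 0 < qPoch (q ^ 2) (a * q ^ 2) j := by
  apply Finset.prod_pos
  intro i _
  have h : a * q ^ 2 * (q ^ 2) ^ i = a * q ^ (2 * i + 2) := by rw [← pow_mul]; ring
  rw [h]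
  exact one_sub_aq_pos hq0 hq1 ha0 ha1 (2 * i)

include hq0 hq1 in
lemma qPoch_q_pos (j : ℕ) : 0 < qPoch q q j := by
  apply Finset.prod_pos
  intro i _
  have h : q * q ^ i = q ^ (i + 1) := by ring
  rw [h]; exact one_sub_pow_pos hq0 hq1 i

include hq0 hq1 in
lemma qPoch_q2_pos (j : ℕ) : 0 < qPoch (q ^ 2) (q ^ 2) j := by
  apply Finset.prod_pos
  intro i _
  have h : (q ^ 2 : ℝ) * (q ^ 2) ^ i = q ^ (2 * i + 1 + 1) := by rw [← pow_mul]; ring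
  rw [h]; exact one_sub_pow_pos hq0 hq1 (2 * i + 1)

end

lemma zpow_nat_sub' {q : ℝ} (hq : q ≠ 0) (m j : ℕ) :
    q ^ ((m : ℤ) - (j : ℤ)) = q ^ m / q ^ j := by
  rw [zpow_sub₀ hq, zpow_natCast, zpow_natCast, div_eq_mul_inv]


-- nat-cast versions of gg lemmas
lemma gg_nsl (b : ℝ) (n j : ℕ) :
    gg b ((n + 1 : ℕ) : ℤ) (j + 1) = (1 - b ^ (n + 1)) * gg b (n : ℤ) j := by
  have h := gg_succ_left b (n : ℤ) j
  have hc : ((n + 1 : ℕ) : ℤ) = (n : ℤ) + 1 := by push_cast; ring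
  rw [hc, h, ← zpow_natCast b (n + 1)]
  norm_num

lemma gg_nsr {b : ℝ} (hb : b ≠ 0) (n j : ℕ) :
    gg b (n : ℤ) (j + 1) = gg b (n : ℤ) j * (1 - b ^ n / b ^ j) := by
  rw [gg_succ_right, zpow_nat_sub' hb]

lemma claimA {q a : ℝ} (hq0 : 0 < q) (hq1 : q < 1) (ha0 : 0 < a) (ha1 : a < (q ^ 2)⁻¹)
    (m j : ℕ) :
    (1 - a * q ^ (2 * m + 4)) * uA q a (m + 2) (j + 1)
      - (1 + q) * uA q a (m + 1) (j + 1)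
      + q * (1 - q ^ (2 * m + 2)) * uA q a m (j + 1)
      + q ^ (2 * m + 3) * (1 + a * q ^ (2 * j + 3)) / q ^ (j + 1) * uA q a (m + 1) (j + 1)
    = q ^ (2 * m + 3) / q ^ j * uA q a (m + 1) j := by
  have hq : q ≠ 0 := ne_of_gt hq0
  have hD : dA q a j ≠ 0 := by
    have := mul_pos (qPoch_aq_pos hq0 hq1 ha0 ha1 j) (qPoch_q_pos hq0 hq1 j)
    rw [dA]; exact ne_of_gt this
  have hja : (1 - a * q ^ (2 * j + 2)) ≠ 0 := ne_of_gt (one_sub_aq_pos hq0 hq1 ha0 ha1 (2 * j))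
  have hj1 : (1 - q ^ (j + 1)) ≠ 0 := ne_of_gt (one_sub_pow_pos hq0 hq1 j)
  have hm1 : (1 - q ^ (m + 1)) ≠ 0 := ne_of_gt (one_sub_pow_pos hq0 hq1 m)
  have e1 : gg q ((m + 2 : ℕ) : ℤ) (j + 1) = (1 - q ^ (m + 2)) * gg q ((m + 1 : ℕ) : ℤ) j := by
    have := gg_nsl q (m + 1) j
    simpa [add_assoc] using this
  have e2 : gg q ((m + 1 : ℕ) : ℤ) (j + 1) = gg q ((m + 1 : ℕ) : ℤ) j * (1 - q ^ (m + 1) / q ^ j) :=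
    gg_nsr hq (m + 1) j
  have e3 : gg q ((m : ℕ) : ℤ) (j + 1) = gg q (m : ℤ) j * (1 - q ^ m / q ^ j) := gg_nsr hq m j
  have e4 : gg q (m : ℤ) j = gg q ((m + 1 : ℕ) : ℤ) j * (1 - q ^ (m + 1) / q ^ j) / (1 - q ^ (m + 1)) := by
    rw [eq_div_iff hm1]
    have h1 := gg_nsl q m j
    have h2 := gg_nsr hq (m + 1) j
    rw [h1] at h2
    linarith [h2]
  simp only [uA]
  rw [e1, e2, e3, e4, eA_succ, dA_succ]
  field_simp
  ring


section
variable {q a : ℝ} (hq0 : 0 < q) (hq1 : q < 1) (ha0 : 0 < a) (ha1 : a < (q ^ 2)⁻¹)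

include hq0 hq1 ha0 ha1 in
lemma prelim (m j : ℕ) : q ≠ 0 ∧ dB q a j ≠ 0 ∧ (1 - a * q ^ (2 * j + 2)) ≠ 0 ∧
    (1 - q ^ (2 * j + 2)) ≠ 0 ∧ ((1:ℝ) - (q ^ 2) ^ (m + 1)) ≠ 0 := by
  refine ⟨ne_of_gt hq0, ?_, ?_, ?_, ?_⟩
  · have := mul_pos (qPoch_aq_pos hq0 hq1 ha0 ha1 j) (qPoch_q2_pos hq0 hq1 j)
    rw [dB]; exact ne_of_gt this
  · exact ne_of_gt (one_sub_aq_pos hq0 hq1 ha0 ha1 (2 * j))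
  · exact ne_of_gt (one_sub_pow_pos hq0 hq1 (2 * j + 1))
  · have h : ((q : ℝ) ^ 2) ^ (m + 1) = q ^ (2 * m + 1 + 1) := by rw [← pow_mul]; ring
    rw [h]; exact ne_of_gt (one_sub_pow_pos hq0 hq1 (2 * m + 1))

include hq0 hq1 ha0 ha1 in
lemma ggq2_e4 (m j : ℕ) : gg (q ^ 2) (m : ℤ) j =
    gg (q ^ 2) ((m + 1 : ℕ) : ℤ) j * (1 - (q ^ 2) ^ (m + 1) / (q ^ 2) ^ j) /
      (1 - (q ^ 2) ^ (m + 1)) := by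
  obtain ⟨hq, -, -, -, hm1⟩ := prelim hq0 hq1 ha0 ha1 m j
  have hb : (q : ℝ) ^ 2 ≠ 0 := pow_ne_zero 2 hq
  rw [eq_div_iff hm1]
  have h1 := gg_nsl (q ^ 2) m j
  have h2 := gg_nsr hb (m + 1) j
  rw [h1] at h2
  linarith [h2]

include hq0 hq1 ha0 ha1 in
lemma claimB (m j : ℕ) :
    (1 - a * q ^ (2 * m + 4)) * uB q a (m + 2) (j + 1)
      - (1 + q) * uB q a (m + 1) (j + 1)
      + q * (1 - q ^ (2 * m + 2)) * uB q a m (j + 1)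
      + q ^ (2 * m + 3) * (1 + a * q ^ (4 * j + 5)) / q ^ (2 * j + 2) * uB q a (m + 1) (j + 1)
    = q ^ (2 * m + 3) / q ^ (2 * j) * uB q a (m + 1) j := by
  obtain ⟨hq, hD, hja, hj1, hm1⟩ := prelim hq0 hq1 ha0 ha1 m j
  have hb : (q : ℝ) ^ 2 ≠ 0 := pow_ne_zero 2 hq
  have e1 : gg (q ^ 2) ((m + 2 : ℕ) : ℤ) (j + 1)
      = (1 - (q ^ 2) ^ (m + 2)) * gg (q ^ 2) ((m + 1 : ℕ) : ℤ) j := by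
    have := gg_nsl (q ^ 2) (m + 1) j
    simpa [add_assoc] using this
  have e2 := gg_nsr hb (m + 1) j
  have e3 := gg_nsr hb m j
  have e4 := ggq2_e4 hq0 hq1 ha0 ha1 m j
  simp only [uB]
  rw [e1, e2, e3, e4, dB_succ]
  field_simp
  ring

include hq0 hq1 ha0 ha1 in
lemma claimC (m j : ℕ) :
    (1 - a * q ^ (2 * m + 4)) * uC q a (m + 2) (j + 1)
      - (1 + q) * uC q a (m + 1) (j + 1)
      + q * (1 - q ^ (2 * m + 2)) * uC q a m (j + 1)
      + q ^ (2 * m + 3) * (1 + a * q ^ (4 * j + 7)) / q ^ (2 * j + 3) * uC q a (m + 1) (j + 1)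
    = q ^ (2 * m + 3) / q ^ (2 * j + 1) * uC q a (m + 1) j := by
  obtain ⟨hq, hD, hja, hj1, hm1⟩ := prelim hq0 hq1 ha0 ha1 m j
  have hb : (q : ℝ) ^ 2 ≠ 0 := pow_ne_zero 2 hq
  have e1 : gg (q ^ 2) ((m + 2 : ℕ) : ℤ) (j + 1)
      = (1 - (q ^ 2) ^ (m + 2)) * gg (q ^ 2) ((m + 1 : ℕ) : ℤ) j := by
    have := gg_nsl (q ^ 2) (m + 1) j
    simpa [add_assoc] using this
  have e2 := gg_nsr hb (m + 1) j
  have e3 := gg_nsr hb m j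
  have e4 := ggq2_e4 hq0 hq1 ha0 ha1 m j
  simp only [uC]
  rw [e1, e2, e3, e4, dB_succ]
  field_simp
  ring

end


lemma recA {q a : ℝ} (hq0 : 0 < q) (hq1 : q < 1) (ha0 : 0 < a) (ha1 : a < (q ^ 2)⁻¹)
    (s : ℝ) (m : ℕ) :
    (1 - a * q ^ (2 * m + 4)) * SA q a s (m + 2) (m + 3)
      = (1 + q - s * q ^ (2 * m + 3)) * SA q a s (m + 1) (m + 3)
        - q * (1 - q ^ (2 * m + 2)) * SA q a s m (m + 3) := by
  have hq : q ≠ 0 := ne_of_gt hq0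
  set Z : ℕ → ℝ := fun j =>
    (1 - a * q ^ (2 * m + 4)) * (uA q a (m + 2) j * PA q a s j)
      - (1 + q) * (uA q a (m + 1) j * PA q a s j)
      + q * (1 - q ^ (2 * m + 2)) * (uA q a m j * PA q a s j)
      + q ^ (2 * m + 3) * (1 + a * q ^ (2 * j + 1)) / q ^ j * (uA q a (m + 1) j * PA q a s j)
    with hZ
  set W : ℕ → ℝ := fun j =>
    q ^ (2 * m + 3) / q ^ j * uA q a (m + 1) j * PA q a s (j + 1) with hW
  have main : ∑ j ∈ Finset.range (m + 3), Z j = ∑ j ∈ Finset.range (m + 3), W j := by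
    rw [Finset.sum_range_succ' Z (m + 2), Finset.sum_range_succ W (m + 2)]
    have hZ0 : Z 0 = 0 := by
      simp only [hZ, uA, PA, eA, gg, dA, qPoch, Finset.range_zero, Finset.prod_empty]
      field_simp
      ring
    have hWtop : W (m + 2) = 0 := by
      simp only [hW, uA, gg_zero_of_lt q (m + 1) (m + 2) (by omega)]
      simp
    rw [hZ0, hWtop, add_zero, add_zero]
    refine Finset.sum_congr rfl fun j _ => ?_
    have hc := claimA hq0 hq1 ha0 ha1 m j
    simp only [hZ, hW]
    have h2 : 2 * (j + 1) + 1 = 2 * j + 3 := by ring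
    rw [h2]
    linear_combination (PA q a s (j + 1)) * hc
  have key : ∀ j, s * q ^ (2 * m + 3) * (uA q a (m + 1) j * PA q a s j)
      = q ^ (2 * m + 3) * (1 + a * q ^ (2 * j + 1)) / q ^ j * (uA q a (m + 1) j * PA q a s j)
        - W j := by
    intro j
    simp only [hW]
    rw [PA_succ]
    field_simp
    ring
  have H : ∑ j ∈ Finset.range (m + 3),
      ((1 - a * q ^ (2 * m + 4)) * (uA q a (m + 2) j * PA q a s j)
        - (1 + q) * (uA q a (m + 1) j * PA q a s j)
        + q * (1 - q ^ (2 * m + 2)) * (uA q a m j * PA q a s j)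
        + s * q ^ (2 * m + 3) * (uA q a (m + 1) j * PA q a s j)) = 0 := by
    have : ∀ j, (1 - a * q ^ (2 * m + 4)) * (uA q a (m + 2) j * PA q a s j)
        - (1 + q) * (uA q a (m + 1) j * PA q a s j)
        + q * (1 - q ^ (2 * m + 2)) * (uA q a m j * PA q a s j)
        + s * q ^ (2 * m + 3) * (uA q a (m + 1) j * PA q a s j) = Z j - W j := by
      intro j
      rw [key j, hZ]
      ring
    simp only [this, Finset.sum_sub_distrib, main, sub_self]
  have expand : ∀ (n : ℕ), SA q a s n (m + 3) = ∑ j ∈ Finset.range (m + 3), uA q a n j * PA q a s j :=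
    fun n => rfl
  rw [expand, expand, expand]
  rw [Finset.sum_add_distrib, Finset.sum_add_distrib, Finset.sum_sub_distrib] at H
  simp only [← Finset.mul_sum] at H
  linarith [H]


lemma recB {q a : ℝ} (hq0 : 0 < q) (hq1 : q < 1) (ha0 : 0 < a) (ha1 : a < (q ^ 2)⁻¹)
    (s : ℝ) (m : ℕ) :
    (1 - a * q ^ (2 * m + 4)) * SB q a s (m + 2) (m + 3)
      = (1 + q - s * q ^ (2 * m + 3)) * SB q a s (m + 1) (m + 3)
        - q * (1 - q ^ (2 * m + 2)) * SB q a s m (m + 3) := by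
  have hq : q ≠ 0 := ne_of_gt hq0
  set Z : ℕ → ℝ := fun j =>
    (1 - a * q ^ (2 * m + 4)) * (uB q a (m + 2) j * PB q a s j)
      - (1 + q) * (uB q a (m + 1) j * PB q a s j)
      + q * (1 - q ^ (2 * m + 2)) * (uB q a m j * PB q a s j)
      + q ^ (2 * m + 3) * (1 + a * q ^ (4 * j + 1)) / q ^ (2 * j) * (uB q a (m + 1) j * PB q a s j)
    with hZ
  set W : ℕ → ℝ := fun j =>
    q ^ (2 * m + 3) / q ^ (2 * j) * uB q a (m + 1) j * PB q a s (j + 1) with hW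
  have main : ∑ j ∈ Finset.range (m + 3), Z j = ∑ j ∈ Finset.range (m + 3), W j := by
    rw [Finset.sum_range_succ' Z (m + 2), Finset.sum_range_succ W (m + 2)]
    have hZ0 : Z 0 = 0 := by
      simp only [hZ, uB, PB, gg, dB, qPoch, Finset.range_zero, Finset.prod_empty]
      field_simp
      ring
    have hWtop : W (m + 2) = 0 := by
      simp only [hW, uB, gg_zero_of_lt (q ^ 2) (m + 1) (m + 2) (by omega)]
      simp
    rw [hZ0, hWtop, add_zero, add_zero]
    refine Finset.sum_congr rfl fun j _ => ?_
    have hc := claimB hq0 hq1 ha0 ha1 m j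
    simp only [hZ, hW]
    have h2 : 4 * (j + 1) + 1 = 4 * j + 5 := by ring
    have h3 : 2 * (j + 1) = 2 * j + 2 := by ring
    rw [h2, h3]
    linear_combination (PB q a s (j + 1)) * hc
  have key : ∀ j, s * q ^ (2 * m + 3) * (uB q a (m + 1) j * PB q a s j)
      = q ^ (2 * m + 3) * (1 + a * q ^ (4 * j + 1)) / q ^ (2 * j) * (uB q a (m + 1) j * PB q a s j)
        - W j := by
    intro j
    simp only [hW]
    rw [PB_succ]
    field_simp
    ring
  have H : ∑ j ∈ Finset.range (m + 3),
      ((1 - a * q ^ (2 * m + 4)) * (uB q a (m + 2) j * PB q a s j)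
        - (1 + q) * (uB q a (m + 1) j * PB q a s j)
        + q * (1 - q ^ (2 * m + 2)) * (uB q a m j * PB q a s j)
        + s * q ^ (2 * m + 3) * (uB q a (m + 1) j * PB q a s j)) = 0 := by
    have : ∀ j, (1 - a * q ^ (2 * m + 4)) * (uB q a (m + 2) j * PB q a s j)
        - (1 + q) * (uB q a (m + 1) j * PB q a s j)
        + q * (1 - q ^ (2 * m + 2)) * (uB q a m j * PB q a s j)
        + s * q ^ (2 * m + 3) * (uB q a (m + 1) j * PB q a s j) = Z j - W j := by
      intro j
      rw [key j, hZ]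
      ring
    simp only [this, Finset.sum_sub_distrib, main, sub_self]
  have expand : ∀ (n : ℕ), SB q a s n (m + 3) = ∑ j ∈ Finset.range (m + 3), uB q a n j * PB q a s j :=
    fun n => rfl
  rw [expand, expand, expand]
  rw [Finset.sum_add_distrib, Finset.sum_add_distrib, Finset.sum_sub_distrib] at H
  simp only [← Finset.mul_sum] at H
  linarith [H]

lemma recC {q a : ℝ} (hq0 : 0 < q) (hq1 : q < 1) (ha0 : 0 < a) (ha1 : a < (q ^ 2)⁻¹)
    (s : ℝ) (m : ℕ) :
    (1 - a * q ^ (2 * m + 4)) * SC q a s (m + 2) (m + 3)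
      = (1 + q - s * q ^ (2 * m + 3)) * SC q a s (m + 1) (m + 3)
        - q * (1 - q ^ (2 * m + 2)) * SC q a s m (m + 3) := by
  have hq : q ≠ 0 := ne_of_gt hq0
  set Z : ℕ → ℝ := fun j =>
    (1 - a * q ^ (2 * m + 4)) * (uC q a (m + 2) j * PC q a s j)
      - (1 + q) * (uC q a (m + 1) j * PC q a s j)
      + q * (1 - q ^ (2 * m + 2)) * (uC q a m j * PC q a s j)
      + q ^ (2 * m + 3) * (1 + a * q ^ (4 * j + 3)) / q ^ (2 * j + 1) * (uC q a (m + 1) j * PC q a s j)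
    with hZ
  set W : ℕ → ℝ := fun j =>
    q ^ (2 * m + 3) / q ^ (2 * j + 1) * uC q a (m + 1) j * PC q a s (j + 1) with hW
  have main : ∑ j ∈ Finset.range (m + 3), Z j = ∑ j ∈ Finset.range (m + 3), W j := by
    rw [Finset.sum_range_succ' Z (m + 2), Finset.sum_range_succ W (m + 2)]
    have hZ0 : Z 0 = 0 := by
      simp only [hZ, uC, PC, gg, dB, qPoch, Finset.range_zero, Finset.prod_empty]
      field_simp
      ring
    have hWtop : W (m + 2) = 0 := by
      simp only [hW, uC, gg_zero_of_lt (q ^ 2) (m + 1) (m + 2) (by omega)]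
      simp
    rw [hZ0, hWtop, add_zero, add_zero]
    refine Finset.sum_congr rfl fun j _ => ?_
    have hc := claimC hq0 hq1 ha0 ha1 m j
    simp only [hZ, hW]
    have h2 : 4 * (j + 1) + 3 = 4 * j + 7 := by ring
    have h3 : 2 * (j + 1) + 1 = 2 * j + 3 := by ring
    rw [h2, h3]
    linear_combination (PC q a s (j + 1)) * hc
  have key : ∀ j, s * q ^ (2 * m + 3) * (uC q a (m + 1) j * PC q a s j)
      = q ^ (2 * m + 3) * (1 + a * q ^ (4 * j + 3)) / q ^ (2 * j + 1) * (uC q a (m + 1) j * PC q a s j)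
        - W j := by
    intro j
    simp only [hW]
    rw [PC_succ]
    field_simp
    ring
  have H : ∑ j ∈ Finset.range (m + 3),
      ((1 - a * q ^ (2 * m + 4)) * (uC q a (m + 2) j * PC q a s j)
        - (1 + q) * (uC q a (m + 1) j * PC q a s j)
        + q * (1 - q ^ (2 * m + 2)) * (uC q a m j * PC q a s j)
        + s * q ^ (2 * m + 3) * (uC q a (m + 1) j * PC q a s j)) = 0 := by
    have : ∀ j, (1 - a * q ^ (2 * m + 4)) * (uC q a (m + 2) j * PC q a s j)
        - (1 + q) * (uC q a (m + 1) j * PC q a s j)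
        + q * (1 - q ^ (2 * m + 2)) * (uC q a m j * PC q a s j)
        + s * q ^ (2 * m + 3) * (uC q a (m + 1) j * PC q a s j) = Z j - W j := by
      intro j
      rw [key j, hZ]
      ring
    simp only [this, Finset.sum_sub_distrib, main, sub_self]
  have expand : ∀ (n : ℕ), SC q a s n (m + 3) = ∑ j ∈ Finset.range (m + 3), uC q a n j * PC q a s j :=
    fun n => rfl
  rw [expand, expand, expand]
  rw [Finset.sum_add_distrib, Finset.sum_add_distrib, Finset.sum_sub_distrib] at H
  simp only [← Finset.mul_sum] at H
  linarith [H]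


lemma SA_ext (q a s : ℝ) (n N : ℕ) (h : n + 1 ≤ N) : SA q a s n (n + 1) = SA q a s n N := by
  apply Finset.sum_subset (Finset.range_subset_range.mpr h)
  intro j hj hj2
  have : n < j := by simp only [Finset.mem_range] at hj hj2; omega
  simp [uA, gg_zero_of_lt q n j this]

lemma SB_ext (q a s : ℝ) (n N : ℕ) (h : n + 1 ≤ N) : SB q a s n (n + 1) = SB q a s n N := by
  apply Finset.sum_subset (Finset.range_subset_range.mpr h)
  intro j hj hj2
  have : n < j := by simp only [Finset.mem_range] at hj hj2; omega
  simp [uB, gg_zero_of_lt (q ^ 2) n j this]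

lemma SC_ext (q a s : ℝ) (n N : ℕ) (h : n + 1 ≤ N) : SC q a s n (n + 1) = SC q a s n N := by
  apply Finset.sum_subset (Finset.range_subset_range.mpr h)
  intro j hj hj2
  have : n < j := by simp only [Finset.mem_range] at hj hj2; omega
  simp [uC, gg_zero_of_lt (q ^ 2) n j this]

section
variable {q a : ℝ} (hq0 : 0 < q) (hq1 : q < 1) (ha0 : 0 < a) (ha1 : a < (q ^ 2)⁻¹)

include hq0 hq1 ha0 ha1 in
lemma baseAB0 (s : ℝ) : SA q a s 0 1 = SB q a s 0 1 := by
  simp [SA, SB, uA, uB, eA, gg, dA, dB, PA, PB, qPoch]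

include hq0 hq1 ha0 ha1 in
lemma baseAC0 (s : ℝ) : SA q a s 0 1 = SC q a s 0 1 := by
  simp [SA, SC, uA, uC, eA, gg, dA, dB, PA, PC, qPoch]

include hq0 hq1 ha0 ha1 in
lemma baseAB1 (s : ℝ) : SA q a s 1 2 = SB q a s 1 2 := by
  have hq : q ≠ 0 := ne_of_gt hq0
  have h1 : (1 : ℝ) - a * q ^ 2 ≠ 0 := ne_of_gt (one_sub_aq_pos hq0 hq1 ha0 ha1 0)
  have h2 : (1 : ℝ) - q ≠ 0 := by
    have := one_sub_pow_pos hq0 hq1 0; simpa using ne_of_gt this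
  have h3 : (1 : ℝ) - q ^ 2 ≠ 0 := ne_of_gt (one_sub_pow_pos hq0 hq1 1)
  simp [SA, SB, uA, uB, eA, gg, dA, dB, PA, PB, qPoch, Finset.sum_range_succ,
    Finset.prod_range_succ]
  left
  field_simp

include hq0 hq1 ha0 ha1 in
lemma baseAC1 (s : ℝ) : SA q a s 1 2 = SC q a s 1 2 := by
  have hq : q ≠ 0 := ne_of_gt hq0
  have h1 : (1 : ℝ) - a * q ^ 2 ≠ 0 := ne_of_gt (one_sub_aq_pos hq0 hq1 ha0 ha1 0)
  have h2 : (1 : ℝ) - q ≠ 0 := by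
    have := one_sub_pow_pos hq0 hq1 0; simpa using ne_of_gt this
  have h3 : (1 : ℝ) - q ^ 2 ≠ 0 := ne_of_gt (one_sub_pow_pos hq0 hq1 1)
  simp [SA, SC, uA, uC, eA, gg, dA, dB, PA, PC, qPoch, Finset.sum_range_succ,
    Finset.prod_range_succ]
  have h1' : (1 : ℝ) - q ^ 2 * a ≠ 0 := by rwa [mul_comm] at h1
  field_simp
  ring

include hq0 hq1 ha0 ha1 in
lemma SA_eq_SB (s : ℝ) (n : ℕ) : SA q a s n (n + 1) = SB q a s n (n + 1) := by
  suffices h : ∀ m : ℕ, SA q a s m (m + 1) = SB q a s m (m + 1) ∧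
      SA q a s (m + 1) (m + 2) = SB q a s (m + 1) (m + 2) from (h n).1
  intro m
  induction m with
  | zero => exact ⟨baseAB0 hq0 hq1 ha0 ha1 s, baseAB1 hq0 hq1 ha0 ha1 s⟩
  | succ m ih =>
    refine ⟨ih.2, ?_⟩
    have hne : (1 : ℝ) - a * q ^ (2 * m + 4) ≠ 0 :=
      ne_of_gt (one_sub_aq_pos hq0 hq1 ha0 ha1 (2 * m + 2))
    have rA := recA hq0 hq1 ha0 ha1 s m
    have rB := recB hq0 hq1 ha0 ha1 s m
    rw [← SA_ext q a s (m + 1) (m + 3) (by omega), ← SA_ext q a s m (m + 3) (by omega)] at rA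
    rw [← SB_ext q a s (m + 1) (m + 3) (by omega), ← SB_ext q a s m (m + 3) (by omega)] at rB
    rw [ih.1, ih.2] at rA
    have : (1 - a * q ^ (2 * m + 4)) * SA q a s (m + 2) (m + 3)
        = (1 - a * q ^ (2 * m + 4)) * SB q a s (m + 2) (m + 3) := by rw [rA, rB]
    exact mul_left_cancel₀ hne this

include hq0 hq1 ha0 ha1 in
lemma SA_eq_SC (s : ℝ) (n : ℕ) : SA q a s n (n + 1) = SC q a s n (n + 1) := by
  suffices h : ∀ m : ℕ, SA q a s m (m + 1) = SC q a s m (m + 1) ∧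
      SA q a s (m + 1) (m + 2) = SC q a s (m + 1) (m + 2) from (h n).1
  intro m
  induction m with
  | zero => exact ⟨baseAC0 hq0 hq1 ha0 ha1 s, baseAC1 hq0 hq1 ha0 ha1 s⟩
  | succ m ih =>
    refine ⟨ih.2, ?_⟩
    have hne : (1 : ℝ) - a * q ^ (2 * m + 4) ≠ 0 :=
      ne_of_gt (one_sub_aq_pos hq0 hq1 ha0 ha1 (2 * m + 2))
    have rA := recA hq0 hq1 ha0 ha1 s m
    have rC := recC hq0 hq1 ha0 ha1 s m
    rw [← SA_ext q a s (m + 1) (m + 3) (by omega), ← SA_ext q a s m (m + 3) (by omega)] at rA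
    rw [← SC_ext q a s (m + 1) (m + 3) (by omega), ← SC_ext q a s m (m + 3) (by omega)] at rC
    rw [ih.1, ih.2] at rA
    have : (1 - a * q ^ (2 * m + 4)) * SA q a s (m + 2) (m + 3)
        = (1 - a * q ^ (2 * m + 4)) * SC q a s (m + 2) (m + 3) := by rw [rA, rC]
    exact mul_left_cancel₀ hne this

end


lemma zpow_neg_nat (q : ℝ) (x : ℕ) : q ^ (-(x : ℤ)) = (q ^ x)⁻¹ := by
  rw [zpow_neg, zpow_natCast]

-- L1
lemma L1 {q : ℝ} (hq : q ≠ 0) (a : ℝ) (x j : ℕ) :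
    qPoch q (q ^ (-(x : ℤ))) j * qPoch q (a * q ^ (x + 1)) j
      = PA q a ((q ^ x)⁻¹ + a * q ^ (x + 1)) j := by
  rw [qPoch, qPoch, PA, ← Finset.prod_mul_distrib]
  refine Finset.prod_congr rfl fun i _ => ?_
  rw [zpow_neg_nat]
  have hx : (q : ℝ) ^ x ≠ 0 := pow_ne_zero _ hq
  field_simp
  ring

-- L2
lemma L2 {q : ℝ} (hq : q ≠ 0) (n j : ℕ) :
    qPoch q (q ^ (-(n : ℤ))) j * (-q ^ (n + 1)) ^ j = eA q j * gg q (n : ℤ) j := by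
  have hp : (-q ^ (n + 1)) ^ j = ∏ _i ∈ Finset.range j, (-q ^ (n + 1)) := by
    rw [Finset.prod_const, Finset.card_range]
  rw [qPoch, eA, gg, hp, ← Finset.prod_mul_distrib, ← Finset.prod_mul_distrib]
  · refine Finset.prod_congr rfl fun i _ => ?_
    rw [zpow_neg_nat, zpow_nat_sub' hq]
    have hx : (q : ℝ) ^ n ≠ 0 := pow_ne_zero _ hq
    have hi : (q : ℝ) ^ i ≠ 0 := pow_ne_zero _ hq
    field_simp
    ring

-- L3
lemma L3 {q : ℝ} (hq : q ≠ 0) (a : ℝ) (k j : ℕ) :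
    qPoch (q ^ 2) (q ^ (-(2 * k : ℤ))) j * qPoch (q ^ 2) (a * q ^ (2 * k + 1)) j
      = PB q a ((q ^ (2 * k))⁻¹ + a * q ^ (2 * k + 1)) j := by
  rw [qPoch, qPoch, PB, ← Finset.prod_mul_distrib]
  refine Finset.prod_congr rfl fun i _ => ?_
  have hc : ((2 * k : ℤ)) = ((2 * k : ℕ) : ℤ) := by push_cast; ring
  rw [hc, zpow_neg_nat]
  have h2 : ((q : ℝ) ^ 2) ^ i = q ^ (2 * i) := by rw [← pow_mul]
  rw [h2]
  have hx : (q : ℝ) ^ (2 * k) ≠ 0 := pow_ne_zero _ hq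
  field_simp
  ring

-- L5 (odd version of L3)
lemma L5 {q : ℝ} (hq : q ≠ 0) (a : ℝ) (k j : ℕ) :
    qPoch (q ^ 2) (q ^ (-(2 * k : ℤ))) j * qPoch (q ^ 2) (a * q ^ (2 * k + 3)) j
      = PC q a ((q ^ (2 * k + 1))⁻¹ + a * q ^ (2 * k + 2)) j := by
  rw [qPoch, qPoch, PC, ← Finset.prod_mul_distrib]
  refine Finset.prod_congr rfl fun i _ => ?_
  have hc : ((2 * k : ℤ)) = ((2 * k : ℕ) : ℤ) := by push_cast; ring
  rw [hc, zpow_neg_nat]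
  have h2 : ((q : ℝ) ^ 2) ^ i = q ^ (2 * i) := by rw [← pow_mul]
  rw [h2]
  have hx : (q : ℝ) ^ (2 * k) ≠ 0 := pow_ne_zero _ hq
  have hx1 : (q : ℝ) ^ (2 * k + 1) ≠ 0 := pow_ne_zero _ hq
  field_simp
  ring

lemma prod_q2i (q : ℝ) (j : ℕ) : ∏ i ∈ Finset.range j, q ^ (2 * i) = q ^ (j * (j - 1)) := by
  rw [Finset.prod_pow_eq_pow_sum]
  congr 1
  have h : ∑ i ∈ Finset.range j, 2 * i = (∑ i ∈ Finset.range j, i) * 2 := by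
    rw [Finset.sum_mul]
    exact Finset.sum_congr rfl fun i _ => by ring
  rw [h, Finset.sum_range_id_mul_two]

-- L4
lemma L4 {q : ℝ} (hq : q ≠ 0) (n j : ℕ) :
    qPoch (q ^ 2) (q ^ (-(2 * n : ℤ))) j
        * ((-1) ^ j * q ^ (-((j * (j - 1) : ℕ) : ℤ)) * q ^ ((2 * n + 1) * j))
      = q ^ j * gg (q ^ 2) (n : ℤ) j := by
  have hscal : ((-1 : ℝ)) ^ j * q ^ (-((j * (j - 1) : ℕ) : ℤ)) * q ^ ((2 * n + 1) * j)
      = ∏ i ∈ Finset.range j, (-(q ^ (2 * n + 1) / q ^ (2 * i))) := by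
    have : ∀ i, (-(q ^ (2 * n + 1) / q ^ (2 * i))) = (-q ^ (2 * n + 1)) / q ^ (2 * i) := by
      intro i; ring
    simp only [this]
    rw [Finset.prod_div_distrib, Finset.prod_const, Finset.card_range, prod_q2i,
      zpow_neg_nat]
    have h : (-q ^ (2 * n + 1) : ℝ) ^ j = (-1) ^ j * q ^ ((2 * n + 1) * j) := by
      rw [← neg_one_mul (q ^ (2 * n + 1)), mul_pow, ← pow_mul]
    rw [h]
    field_simp
  have hqj : (q : ℝ) ^ j = ∏ _i ∈ Finset.range j, q := by
    rw [Finset.prod_const, Finset.card_range]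
  rw [hscal, qPoch, ← Finset.prod_mul_distrib, gg, hqj, ← Finset.prod_mul_distrib]
  refine Finset.prod_congr rfl fun i _ => ?_
  have hc : ((2 * n : ℤ)) = ((2 * n : ℕ) : ℤ) := by push_cast; ring
  rw [hc, zpow_neg_nat]
  have hsub : ((q : ℝ) ^ 2) ^ ((n : ℤ) - (i : ℤ)) = q ^ (2 * n) / q ^ (2 * i) := by
    rw [zpow_nat_sub' (pow_ne_zero 2 hq) n i, ← pow_mul, ← pow_mul]
  have h2 : ((q : ℝ) ^ 2) ^ i = q ^ (2 * i) := by rw [← pow_mul]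
  rw [hsub, h2]
  have hx : (q : ℝ) ^ (2 * n) ≠ 0 := pow_ne_zero _ hq
  have hi : (q : ℝ) ^ (2 * i) ≠ 0 := pow_ne_zero _ hq
  field_simp
  ring

-- L6
lemma L6 {q : ℝ} (hq : q ≠ 0) (n j : ℕ) :
    qPoch (q ^ 2) (q ^ (-(2 * n : ℤ))) j
        * ((-1) ^ j * q ^ (-((j * (j - 1) : ℕ) : ℤ)) * q ^ ((2 * (n : ℤ) - 1) * (j : ℤ)))
      = gg (q ^ 2) (n : ℤ) j / q ^ j := by
  have hz : (q : ℝ) ^ ((2 * (n : ℤ) - 1) * (j : ℤ)) = q ^ (2 * n * j) / q ^ j := by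
    have hc : (2 * (n : ℤ) - 1) * (j : ℤ) = ((2 * n * j : ℕ) : ℤ) - ((j : ℕ) : ℤ) := by
      push_cast; ring
    rw [hc, zpow_sub₀ hq, zpow_natCast, zpow_natCast]
  have hscal : ((-1 : ℝ)) ^ j * q ^ (-((j * (j - 1) : ℕ) : ℤ)) * q ^ ((2 * (n : ℤ) - 1) * (j : ℤ))
      = ∏ i ∈ Finset.range j, (-(q ^ (2 * n) / (q ^ (2 * i) * q))) := by
    have : ∀ i, (-(q ^ (2 * n) / (q ^ (2 * i) * q))) = (-q ^ (2 * n)) / (q ^ (2 * i) * q) := by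
      intro i; ring
    simp only [this]
    rw [Finset.prod_div_distrib, Finset.prod_const, Finset.prod_mul_distrib,
      Finset.prod_const, Finset.card_range, prod_q2i, zpow_neg_nat, hz]
    have h : (-q ^ (2 * n) : ℝ) ^ j = (-1) ^ j * q ^ (2 * n * j) := by
      rw [← neg_one_mul (q ^ (2 * n)), mul_pow, ← pow_mul]
    rw [h]
    field_simp
  have hqj : ((q : ℝ) ^ j)⁻¹ = ∏ _i ∈ Finset.range j, q⁻¹ := by
    rw [Finset.prod_const, Finset.card_range, inv_pow]
  rw [hscal, qPoch, ← Finset.prod_mul_distrib, gg]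
  rw [div_eq_mul_inv, hqj, ← Finset.prod_mul_distrib]
  refine Finset.prod_congr rfl fun i _ => ?_
  have hc : ((2 * n : ℤ)) = ((2 * n : ℕ) : ℤ) := by push_cast; ring
  rw [hc, zpow_neg_nat]
  have hsub : ((q : ℝ) ^ 2) ^ ((n : ℤ) - (i : ℤ)) = q ^ (2 * n) / q ^ (2 * i) := by
    rw [zpow_nat_sub' (pow_ne_zero 2 hq) n i, ← pow_mul, ← pow_mul]
  have h2 : ((q : ℝ) ^ 2) ^ i = q ^ (2 * i) := by rw [← pow_mul]
  rw [hsub, h2]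
  have hx : (q : ℝ) ^ (2 * n) ≠ 0 := pow_ne_zero _ hq
  have hi : (q : ℝ) ^ (2 * i) ≠ 0 := pow_ne_zero _ hq
  field_simp
  ring


theorem dualDiscreteQUltra_factorization
    (q a : ℝ) (hq0 : 0 < q) (hq1 : q < 1)
    (ha0 : 0 < a) (ha1 : a < (q ^ 2)⁻¹) (k n : ℕ) :
    dualDiscreteQUltra q a n (2 * k) =
      ∑ j ∈ Finset.range (n + 1),
        qPoch (q ^ 2) (q ^ (-(2 * k : ℤ))) j * qPoch (q ^ 2) (a * q ^ (2 * k + 1)) j *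
            qPoch (q ^ 2) (q ^ (-(2 * n : ℤ))) j /
          (qPoch (q ^ 2) (a * q ^ 2) j * qPoch (q ^ 2) (q ^ 2) j) *
          ((-1) ^ j * q ^ (-((j * (j - 1) : ℕ) : ℤ)) * q ^ ((2 * n + 1) * j)) ∧
    dualDiscreteQUltra q a n (2 * k + 1) =
      q ^ n *
        ∑ j ∈ Finset.range (n + 1),
          qPoch (q ^ 2) (q ^ (-(2 * k : ℤ))) j * qPoch (q ^ 2) (a * q ^ (2 * k + 3)) j *
              qPoch (q ^ 2) (q ^ (-(2 * n : ℤ))) j /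
            (qPoch (q ^ 2) (a * q ^ 2) j * qPoch (q ^ 2) (q ^ 2) j) *
            ((-1) ^ j * q ^ (-((j * (j - 1) : ℕ) : ℤ)) *
              q ^ ((2 * (n : ℤ) - 1) * (j : ℤ))) := by
  have hq : q ≠ 0 := ne_of_gt hq0
  constructor
  · -- even case
    set s : ℝ := (q ^ (2 * k))⁻¹ + a * q ^ (2 * k + 1) with hs
    have e1 : dualDiscreteQUltra q a n (2 * k) = SA q a s n (n + 1) := by
      refine Finset.sum_congr rfl fun j _ => ?_
      rw [L1 hq a (2 * k) j]
      have h2 := L2 hq n j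
      rw [uA, dA]
      linear_combination (PA q a s j / (qPoch (q ^ 2) (a * q ^ 2) j * qPoch q q j)) * h2
    have e2 : SB q a s n (n + 1) =
        ∑ j ∈ Finset.range (n + 1),
          qPoch (q ^ 2) (q ^ (-(2 * k : ℤ))) j * qPoch (q ^ 2) (a * q ^ (2 * k + 1)) j *
              qPoch (q ^ 2) (q ^ (-(2 * n : ℤ))) j /
            (qPoch (q ^ 2) (a * q ^ 2) j * qPoch (q ^ 2) (q ^ 2) j) *
            ((-1) ^ j * q ^ (-((j * (j - 1) : ℕ) : ℤ)) * q ^ ((2 * n + 1) * j)) := by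
      refine Finset.sum_congr rfl fun j _ => ?_
      rw [L3 hq a k j]
      have h4 := L4 hq n j
      rw [uB, dB]
      linear_combination -(PB q a s j / (qPoch (q ^ 2) (a * q ^ 2) j * qPoch (q ^ 2) (q ^ 2) j)) * h4
    rw [e1, SA_eq_SB hq0 hq1 ha0 ha1 s n, e2]
  · -- odd case
    set s : ℝ := (q ^ (2 * k + 1))⁻¹ + a * q ^ (2 * k + 2) with hs
    have e1 : dualDiscreteQUltra q a n (2 * k + 1) = SA q a s n (n + 1) := by
      refine Finset.sum_congr rfl fun j _ => ?_
      rw [L1 hq a (2 * k + 1) j]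
      have h2 := L2 hq n j
      rw [uA, dA]
      linear_combination (PA q a s j / (qPoch (q ^ 2) (a * q ^ 2) j * qPoch q q j)) * h2
    have e2 : SC q a s n (n + 1) =
        q ^ n * ∑ j ∈ Finset.range (n + 1),
          qPoch (q ^ 2) (q ^ (-(2 * k : ℤ))) j * qPoch (q ^ 2) (a * q ^ (2 * k + 3)) j *
              qPoch (q ^ 2) (q ^ (-(2 * n : ℤ))) j /
            (qPoch (q ^ 2) (a * q ^ 2) j * qPoch (q ^ 2) (q ^ 2) j) *
            ((-1) ^ j * q ^ (-((j * (j - 1) : ℕ) : ℤ)) *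
              q ^ ((2 * (n : ℤ) - 1) * (j : ℤ))) := by
      rw [Finset.mul_sum]
      refine Finset.sum_congr rfl fun j _ => ?_
      rw [L5 hq a k j]
      have h6 := L6 hq n j
      rw [uC, dB]
      linear_combination -(q ^ n * PC q a s j /
        (qPoch (q ^ 2) (a * q ^ 2) j * qPoch (q ^ 2) (q ^ 2) j)) * h6
    rw [e1, SA_eq_SC hq0 hq1 ha0 ha1 s n, e2]
end

section
/- Let 0 < q < 1, 0 < a < q^{-1} and b < 0. Then for all n, n' ∈ ℕ the series below converges absolutely and the two dual q-Meixner families are mutually orthogonal: Σ_{m=0}^{∞} [(−1)^m q^{m(m−1)/2} / (q;q)_m] · M_n(q^{−m};a,−b/a;q) · M_{n'}(q^{−m};b,−a/b;q) = 0. -/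
open scoped BigOperators

noncomputable def coefE (q : ℝ) (m : ℕ) : ℝ :=
  (-1 : ℝ) ^ m * q ^ (m * (m - 1) / 2) / qPoch q q m

lemma tri (m : ℕ) : (m + 1) * m / 2 = m * (m - 1) / 2 + m := by
  have h1 : (m + 1).choose 2 = (m+1) * m / 2 := by
    rw [Nat.choose_two_right]; simp
  have h2 : m.choose 2 = m * (m-1) / 2 := Nat.choose_two_right m
  have h3 : (m + 1).choose 2 = m.choose 1 + m.choose 2 := Nat.choose_succ_succ m 1
  simp [Nat.choose_one_right] at h3
  omega

lemma qPoch_q_pos_s14 {q : ℝ} (hq0 : 0 < q) (hq1 : q < 1) (m : ℕ) : 0 < qPoch q q m := by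
  apply Finset.prod_pos
  intro j _
  have : q * q ^ j ≤ q * 1 := by
    apply mul_le_mul_of_nonneg_left _ hq0.le
    exact pow_le_one₀ hq0.le hq1.le
  nlinarith

lemma qPoch_q_ge {q : ℝ} (hq0 : 0 < q) (hq1 : q < 1) (m : ℕ) :
    (1 - q) ^ m ≤ qPoch q q m := by
  have hrw : (1 - q) ^ m = ∏ _j ∈ Finset.range m, (1 - q) := by simp
  rw [hrw, qPoch]
  apply Finset.prod_le_prod (fun j _ => by linarith)
  intro j _
  have : q * q ^ j ≤ q * 1 := by
    apply mul_le_mul_of_nonneg_left _ hq0.le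
    exact pow_le_one₀ hq0.le hq1.le
  nlinarith

lemma coef_rec {q : ℝ} (hq0 : 0 < q) (hq1 : q < 1) (m : ℕ) :
    coefE q (m + 1) * (1 - q ^ (m + 1)) = -(coefE q m * q ^ m) := by
  have hP : qPoch q q m ≠ 0 := (qPoch_q_pos_s14 hq0 hq1 m).ne'
  have hc : (1 : ℝ) - q * q ^ m ≠ 0 := by
    have : q * q ^ m ≤ q * 1 := by
      apply mul_le_mul_of_nonneg_left _ hq0.le
      exact pow_le_one₀ hq0.le hq1.le
    nlinarith
  have hq : qPoch q q (m + 1) = qPoch q q m * (1 - q * q ^ m) := by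
    rw [qPoch, Finset.prod_range_succ]; rfl
  have he : (m + 1) * ((m + 1) - 1) / 2 = m * (m - 1) / 2 + m := by
    simpa using tri m
  simp only [coefE, hq, he, pow_add, pow_succ']
  field_simp
  rw [div_self (by rwa [mul_comm] at hc)]

lemma summable_aux {q : ℝ} (hq0 : 0 < q) (hq1 : q < 1) (r : ℝ) :
    Summable (fun m : ℕ => q ^ (m * (m - 1) / 2) * r ^ m) := by
  apply summable_of_ratio_norm_eventually_le (r := 1/2) (by norm_num)
  have hev : ∀ᶠ m : ℕ in Filter.atTop, q ^ m * |r| ≤ 1/2 := by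
    have h0 : Filter.Tendsto (fun m : ℕ => q ^ m * |r|) Filter.atTop (nhds 0) := by
      simpa using (tendsto_pow_atTop_nhds_zero_of_lt_one hq0.le hq1).mul_const |r|
    have := h0.eventually_le_const (show (0:ℝ) < 1/2 by norm_num)
    simpa using this
  filter_upwards [hev] with m hm
  have he : (m + 1) * ((m + 1) - 1) / 2 = m * (m - 1) / 2 + m := by simpa using tri m
  rw [Real.norm_eq_abs, Real.norm_eq_abs, abs_mul, abs_mul, abs_pow, abs_pow, abs_pow,
    abs_of_pos hq0, he, pow_add, pow_succ]
  calc q ^ (m * (m - 1) / 2) * q ^ m * (|r| ^ m * |r|)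
      = (q ^ m * |r|) * (q ^ (m * (m - 1) / 2) * |r| ^ m) := by ring
    _ ≤ 1/2 * (q ^ (m * (m - 1) / 2) * |r| ^ m) := by
        apply mul_le_mul_of_nonneg_right hm
        positivity
    _ = 1/2 * (q ^ (m * (m - 1) / 2) * |r ^ m|) := by rw [abs_pow]

lemma summable_coef {q : ℝ} (hq0 : 0 < q) (hq1 : q < 1) (z : ℝ) :
    Summable (fun m : ℕ => coefE q m * z ^ m) := by
  apply Summable.of_norm_bounded (summable_aux hq0 hq1 (|z| / (1 - q)))
  intro m
  have hP := qPoch_q_pos_s14 hq0 hq1 m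
  have hPg := qPoch_q_ge hq0 hq1 m
  have h1q : (0:ℝ) < 1 - q := by linarith
  have hqp : (0:ℝ) < q ^ (m * (m - 1) / 2) := pow_pos hq0 _
  rw [Real.norm_eq_abs, coefE, abs_mul, abs_div, abs_mul, abs_pow, abs_pow, abs_neg, abs_one,
    one_pow, abs_of_pos hq0, abs_of_pos hP, one_mul, abs_pow, div_pow,
    div_mul_eq_mul_div, mul_div_assoc]
  apply mul_le_mul_of_nonneg_left _ hqp.le
  rw [div_le_div_iff₀ hP (pow_pos h1q m)]
  apply mul_le_mul_of_nonneg_left hPg (pow_nonneg (abs_nonneg z) m)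

lemma func_eq {q : ℝ} (hq0 : 0 < q) (hq1 : q < 1) (z : ℝ) :
    ∑' m : ℕ, coefE q m * z ^ m = (1 - z) * ∑' m : ℕ, coefE q m * (q * z) ^ m := by
  have S1 := summable_coef hq0 hq1 z
  have S2 := summable_coef hq0 hq1 (q * z)
  have hEs : Summable (fun m : ℕ => coefE q m * z ^ m * (1 - q ^ m)) := by
    have h : (fun m : ℕ => coefE q m * z ^ m * (1 - q ^ m))
        = fun m => coefE q m * z ^ m - coefE q m * (q * z) ^ m := by
      funext m; rw [mul_pow]; ring
    rw [h]; exact S1.sub S2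
  have hGs : Summable (fun m : ℕ => coefE q m * q ^ m * z ^ (m + 1)) := by
    have h : (fun m : ℕ => coefE q m * q ^ m * z ^ (m + 1))
        = fun m => z * (coefE q m * (q * z) ^ m) := by
      funext m; rw [mul_pow]; ring
    rw [h]; exact S2.mul_left z
  have key : (∑' m : ℕ, coefE q m * z ^ m * (1 - q ^ m))
      + ∑' m : ℕ, coefE q m * q ^ m * z ^ (m + 1) = 0 := by
    have h0 : ∑' m : ℕ, coefE q m * z ^ m * (1 - q ^ m)
        = ∑' m : ℕ, coefE q (m + 1) * z ^ (m + 1) * (1 - q ^ (m + 1)) := by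
      rw [Summable.tsum_eq_zero_add hEs]; simp
    have h1 : ∀ m : ℕ, coefE q (m + 1) * z ^ (m + 1) * (1 - q ^ (m + 1))
        = -(coefE q m * q ^ m * z ^ (m + 1)) := by
      intro m
      calc coefE q (m + 1) * z ^ (m + 1) * (1 - q ^ (m + 1))
          = (coefE q (m + 1) * (1 - q ^ (m + 1))) * z ^ (m + 1) := by ring
        _ = -(coefE q m * q ^ m) * z ^ (m + 1) := by rw [coef_rec hq0 hq1 m]
        _ = -(coefE q m * q ^ m * z ^ (m + 1)) := by ring
    rw [h0]
    simp_rw [h1]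
    rw [tsum_neg]
    ring
  rw [← tsum_mul_left]
  have h2 : (∑' m : ℕ, coefE q m * z ^ m)
      - ∑' m : ℕ, (1 - z) * (coefE q m * (q * z) ^ m) = 0 := by
    rw [← Summable.tsum_sub S1 (S2.mul_left (1 - z))]
    have h3 : ∀ m : ℕ, coefE q m * z ^ m - (1 - z) * (coefE q m * (q * z) ^ m)
        = coefE q m * z ^ m * (1 - q ^ m) + coefE q m * q ^ m * z ^ (m + 1) := by
      intro m; rw [mul_pow]; ring
    rw [tsum_congr h3, Summable.tsum_add hEs hGs, key]
  linarith

lemma f_zero {q : ℝ} (hq0 : 0 < q) (hq1 : q < 1) (s : ℕ) :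
    ∑' m : ℕ, coefE q m * ((q⁻¹) ^ s) ^ m = 0 := by
  induction s with
  | zero =>
      rw [func_eq hq0 hq1]
      simp
  | succ s ih =>
      rw [func_eq hq0 hq1]
      have h : q * (q⁻¹) ^ (s + 1) = (q⁻¹) ^ s := by
        rw [pow_succ']
        field_simp
      rw [h, ih, mul_zero]

lemma poly_zero {q : ℝ} (hq0 : 0 < q) (hq1 : q < 1) (p : Polynomial ℝ) :
    Summable (fun m : ℕ => coefE q m * p.eval ((q⁻¹) ^ m)) ∧
    ∑' m : ℕ, coefE q m * p.eval ((q⁻¹) ^ m) = 0 := by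
  induction p using Polynomial.induction_on' with
  | add p r hp hr =>
      have h : ∀ m : ℕ, coefE q m * (p + r).eval ((q⁻¹) ^ m)
          = coefE q m * p.eval ((q⁻¹) ^ m) + coefE q m * r.eval ((q⁻¹) ^ m) := by
        intro m; rw [Polynomial.eval_add]; ring
      constructor
      · exact (hp.1.add hr.1).congr (fun m => (h m).symm)
      · rw [tsum_congr h, Summable.tsum_add hp.1 hr.1, hp.2, hr.2, add_zero]
  | monomial s c =>
      have h : ∀ m : ℕ, coefE q m * (Polynomial.monomial s c).eval ((q⁻¹) ^ m)
          = c * (coefE q m * ((q⁻¹) ^ s) ^ m) := by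
        intro m
        rw [Polynomial.eval_monomial, ← pow_mul, mul_comm m s, pow_mul]
        ring
      constructor
      · exact (((summable_coef hq0 hq1 ((q⁻¹) ^ s)).mul_left c)).congr (fun m => (h m).symm)
      · rw [tsum_congr h, tsum_mul_left, f_zero hq0 hq1 s, mul_zero]

/-- The q-Meixner polynomials `M_n(q^{-x};a,b;q)`. -/
noncomputable def qMeixner (q a b : ℝ) (n x : ℕ) : ℝ :=
  ∑ k ∈ Finset.range (n + 1),
    qPoch q (q ^ (-(n : ℤ))) k * qPoch q (q ^ (-(x : ℤ))) k /
      (qPoch q (a * q) k * qPoch q q k) * (-q ^ (n + 1) / b) ^ k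

theorem qMeixner_mutual_orthogonality
    (q a b : ℝ) (hq0 : 0 < q) (hq1 : q < 1)
    (ha0 : 0 < a) (ha1 : a < q⁻¹) (hb : b < 0) (n n' : ℕ) :
    Summable (fun m : ℕ =>
      |(-1 : ℝ) ^ m * q ^ (m * (m - 1) / 2) / qPoch q q m *
        qMeixner q a (-(b / a)) n m * qMeixner q b (-(a / b)) n' m|) ∧
    ∑' m : ℕ,
        (-1 : ℝ) ^ m * q ^ (m * (m - 1) / 2) / qPoch q q m *
          qMeixner q a (-(b / a)) n m * qMeixner q b (-(a / b)) n' m = 0 := by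
  classical
  set Pk : ℕ → Polynomial ℝ :=
    fun k => ∏ j ∈ Finset.range k, (1 - Polynomial.C (q ^ j) * Polynomial.X) with hPkdef
  have hPk : ∀ (k m : ℕ), (Pk k).eval ((q⁻¹) ^ m) = qPoch q (q ^ (-(m : ℤ))) k := by
    intro k m
    have hz : (q : ℝ) ^ (-(m : ℤ)) = (q⁻¹) ^ m := by
      rw [zpow_neg, zpow_natCast, inv_pow]
    rw [qPoch, hPkdef, Polynomial.eval_prod]
    apply Finset.prod_congr rfl
    intro j _
    rw [hz]
    simp [mul_comm]
  have hM : ∀ (c β : ℝ) (N m : ℕ), qMeixner q c β N m =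
      ∑ k ∈ Finset.range (N + 1),
        (qPoch q (q ^ (-(N : ℤ))) k / (qPoch q (c * q) k * qPoch q q k)
          * (-q ^ (N + 1) / β) ^ k) * (Pk k).eval ((q⁻¹) ^ m) := by
    intro c β N m
    rw [qMeixner]
    apply Finset.sum_congr rfl
    intro k _
    rw [hPk k m]
    ring
  set u : ℕ → ℝ := fun k =>
    qPoch q (q ^ (-(n : ℤ))) k / (qPoch q (a * q) k * qPoch q q k)
      * (-q ^ (n + 1) / (-(b / a))) ^ k with hu
  set v : ℕ → ℝ := fun l =>
    qPoch q (q ^ (-(n' : ℤ))) l / (qPoch q (b * q) l * qPoch q q l)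
      * (-q ^ (n' + 1) / (-(a / b))) ^ l with hv
  set sfin : Finset (ℕ × ℕ) := Finset.range (n + 1) ×ˢ Finset.range (n' + 1) with hsfin
  have hT : ∀ m : ℕ,
      (-1 : ℝ) ^ m * q ^ (m * (m - 1) / 2) / qPoch q q m *
        qMeixner q a (-(b / a)) n m * qMeixner q b (-(a / b)) n' m
      = ∑ kl ∈ sfin, (u kl.1 * v kl.2) *
          (coefE q m * ((Pk kl.1 * Pk kl.2).eval ((q⁻¹) ^ m))) := by
    intro m
    rw [hM a (-(b / a)) n m, hM b (-(a / b)) n' m, mul_assoc, Finset.sum_mul_sum,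
      hsfin, Finset.sum_product, Finset.mul_sum]
    apply Finset.sum_congr rfl
    intro k _
    rw [Finset.mul_sum]
    apply Finset.sum_congr rfl
    intro l _
    rw [show (-1 : ℝ) ^ m * q ^ (m * (m - 1) / 2) / qPoch q q m = coefE q m from rfl]
    rw [Polynomial.eval_mul, hu, hv]
    ring
  have hsumm : ∀ kl ∈ sfin, Summable (fun m : ℕ => (u kl.1 * v kl.2) *
      (coefE q m * ((Pk kl.1 * Pk kl.2).eval ((q⁻¹) ^ m)))) :=
    fun kl _ => ((poly_zero hq0 hq1 (Pk kl.1 * Pk kl.2)).1).mul_left _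
  have hS : Summable (fun m : ℕ =>
      (-1 : ℝ) ^ m * q ^ (m * (m - 1) / 2) / qPoch q q m *
        qMeixner q a (-(b / a)) n m * qMeixner q b (-(a / b)) n' m) := by
    rw [funext hT]
    exact summable_sum hsumm
  refine ⟨summable_abs_iff.mpr hS, ?_⟩
  rw [tsum_congr hT, Summable.tsum_finsetSum hsumm]
  apply Finset.sum_eq_zero
  intro kl _
  rw [tsum_mul_left, (poly_zero hq0 hq1 (Pk kl.1 * Pk kl.2)).2, mul_zero]
end
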